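/- Let P₁ = (M₁, κ₁) and P₂ = (M₂, κ₂) be complete deterministic Parity acceptors over the same finite alphabet with finite state sets. Then ⟦P₁⟧ ⊆ ⟦P₂⟧ if and only if there is no reachable SCC C of the product automaton M₁ × M₂ such that the minimum of κ₁ over π₁(C) is odd and the minimum of κ₂ over π₂(C) is even. Moreover, if ⟦P₁⟧ is not a subset of ⟦P₂⟧, then there exist u ∈ Σ* and v ∈ Σ⁺ such that the ultimately periodic ω-word u(v)^ω is in ⟦P₁⟧ \ ⟦P₂⟧. -/

import Mathlib

open Filter

/-- Extended transition function: `dstar δ q x` is the state reached from `q` reading `x`. -/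
def dstar {Q A : Type*} (δ : Q → A → Q) (q : Q) (x : List A) : Q := x.foldl δ q

/-- The run of a deterministic automaton on an ω-word from state `q`. -/
def run {Q A : Type*} (δ : Q → A → Q) (q : Q) (w : ℕ → A) : ℕ → Q
  | 0 => q
  | n + 1 => δ (run δ q w n) (w n)

/-- The set of states visited infinitely often by the run on `w` from `q`. -/
def infOcc {Q A : Type*} (δ : Q → A → Q) (q : Q) (w : ℕ → A) : Set Q :=
  {p | ∃ᶠ n in atTop, run δ q w n = p}

/-- `C` is a strongly connected component of the automaton with transitions `δ`. -/
def IsSCC {Q A : Type*} (δ : Q → A → Q) (C : Set Q) : Prop :=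
  C.Nonempty ∧ ∀ q₁ ∈ C, ∀ q₂ ∈ C, ∃ x : List A, x ≠ [] ∧ dstar δ q₁ x = q₂ ∧
    ∀ x', x' <+: x → dstar δ q₁ x' ∈ C

/-- `q` is reachable from the initial state `qι`. -/
def Reachable {Q A : Type*} (δ : Q → A → Q) (qι q : Q) : Prop :=
  ∃ x : List A, dstar δ qι x = q

/-- The ultimately periodic ω-word `u(v)^ω`. -/
def upWord {A : Type*} (u v : List A) (hv : v ≠ []) : ℕ → A := fun n =>
  if h : n < u.length then u[n]
  else v[(n - u.length) % v.length]'(Nat.mod_lt _ (List.length_pos_iff.mpr hv))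

/-- The transition function of the product automaton. -/
def prodStep {Q₁ Q₂ A : Type*} (δ₁ : Q₁ → A → Q₁) (δ₂ : Q₂ → A → Q₂) :
    Q₁ × Q₂ → A → Q₁ × Q₂ := fun p a => (δ₁ p.1 a, δ₂ p.2 a)

/-- The ω-word `x·z` obtained by prepending the finite word `x` to `z`. -/
def prepend {A : Type*} (x : List A) (z : ℕ → A) : ℕ → A := fun n =>
  if h : n < x.length then x[n] else z (n - x.length)

/-- Acceptance of a deterministic Parity acceptor. -/
def parityAccept {Q A : Type*} (δ : Q → A → Q) (qι : Q) (κ : Q → ℕ) (w : ℕ → A) : Prop :=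
  Odd (sInf (κ '' infOcc δ qι w))

section helpers
open Filter
variable {Q A Q₁ Q₂ : Type*}

lemma dstar_append (δ : Q → A → Q) (q : Q) (x y : List A) :
    dstar δ q (x ++ y) = dstar δ (dstar δ q x) y := List.foldl_append ..

lemma run_add (δ : Q → A → Q) (q : Q) (w : ℕ → A) (n k : ℕ) :
    run δ q w (n + k) = dstar δ (run δ q w n) ((List.range k).map (fun i => w (n + i))) := by
  induction k with
  | zero => simp [dstar]
  | succ k ih =>
      rw [← Nat.add_assoc]
      simp only [run, ih, List.range_succ, List.map_append, List.map_cons, List.map_nil,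
        dstar_append]
      simp [dstar]

lemma run_eq_dstar (δ : Q → A → Q) (q : Q) (w : ℕ → A) (n : ℕ) :
    run δ q w n = dstar δ q ((List.range n).map w) := by
  have := run_add δ q w 0 n
  simpa [run] using this

lemma run_prod (δ₁ : Q₁ → A → Q₁) (δ₂ : Q₂ → A → Q₂) (q₁ : Q₁) (q₂ : Q₂) (w : ℕ → A) (n : ℕ) :
    run (prodStep δ₁ δ₂) (q₁, q₂) w n = (run δ₁ q₁ w n, run δ₂ q₂ w n) := by
  induction n with
  | zero => rfl
  | succ n ih => simp [run, ih, prodStep]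

lemma infOcc_prod_fst [Finite Q₂] (δ₁ : Q₁ → A → Q₁) (δ₂ : Q₂ → A → Q₂)
    (q₁ : Q₁) (q₂ : Q₂) (w : ℕ → A) :
    Prod.fst '' infOcc (prodStep δ₁ δ₂) (q₁, q₂) w = infOcc δ₁ q₁ w := by
  ext p
  constructor
  · rintro ⟨⟨a, b⟩, hab, rfl⟩
    exact hab.mono fun n hn => by
      rw [run_prod] at hn
      exact congrArg Prod.fst hn
  · intro hp
    by_contra hc
    have h1 : ∀ b : Q₂, ∀ᶠ n in atTop, run (prodStep δ₁ δ₂) (q₁, q₂) w n ≠ (p, b) := by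
      intro b
      have : (p, b) ∉ infOcc (prodStep δ₁ δ₂) (q₁, q₂) w := fun h => hc ⟨(p, b), h, rfl⟩
      simpa [infOcc, Filter.not_frequently] using this
    have h2 : ∀ᶠ n in atTop, ∀ b : Q₂, run (prodStep δ₁ δ₂) (q₁, q₂) w n ≠ (p, b) :=
      Filter.eventually_all.mpr h1
    obtain ⟨n, hn1, hn2⟩ := (hp.and_eventually h2).exists
    exact hn2 (run δ₂ q₂ w n) (by rw [run_prod, hn1])

lemma infOcc_prod_snd [Finite Q₁] (δ₁ : Q₁ → A → Q₁) (δ₂ : Q₂ → A → Q₂)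
    (q₁ : Q₁) (q₂ : Q₂) (w : ℕ → A) :
    Prod.snd '' infOcc (prodStep δ₁ δ₂) (q₁, q₂) w = infOcc δ₂ q₂ w := by
  ext p
  constructor
  · rintro ⟨⟨a, b⟩, hab, rfl⟩
    exact hab.mono fun n hn => by
      rw [run_prod] at hn
      exact congrArg Prod.snd hn
  · intro hp
    by_contra hc
    have h1 : ∀ a : Q₁, ∀ᶠ n in atTop, run (prodStep δ₁ δ₂) (q₁, q₂) w n ≠ (a, p) := by
      intro a
      have : (a, p) ∉ infOcc (prodStep δ₁ δ₂) (q₁, q₂) w := fun h => hc ⟨(a, p), h, rfl⟩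
      simpa [infOcc, Filter.not_frequently] using this
    have h2 : ∀ᶠ n in atTop, ∀ a : Q₁, run (prodStep δ₁ δ₂) (q₁, q₂) w n ≠ (a, p) :=
      Filter.eventually_all.mpr h1
    obtain ⟨n, hn1, hn2⟩ := (hp.and_eventually h2).exists
    exact hn2 (run δ₁ q₁ w n) (by rw [run_prod, hn1])

lemma eventually_mem_infOcc [Finite Q] (δ : Q → A → Q) (q : Q) (w : ℕ → A) :
    ∀ᶠ n in atTop, run δ q w n ∈ infOcc δ q w := by
  have h : ∀ p : Q, ∀ᶠ n in atTop, run δ q w n = p → p ∈ infOcc δ q w := by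
    intro p
    by_cases hp : p ∈ infOcc δ q w
    · exact Filter.Eventually.of_forall fun n _ => hp
    · have : ∀ᶠ n in atTop, run δ q w n ≠ p := by
        simpa [infOcc, Filter.not_frequently] using hp
      exact this.mono fun n hn h' => absurd h' hn
  exact (Filter.eventually_all.mpr h).mono fun n hn => hn _ rfl

lemma isSCC_infOcc [Finite Q] (δ : Q → A → Q) (q : Q) (w : ℕ → A) :
    IsSCC δ (infOcc δ q w) := by
  obtain ⟨N, hN⟩ := Filter.eventually_atTop.mp (eventually_mem_infOcc δ q w)
  refine ⟨⟨run δ q w N, hN N le_rfl⟩, ?_⟩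
  intro a ha b hb
  obtain ⟨n, hnN, hna⟩ := Filter.frequently_atTop.mp ha N
  obtain ⟨m, hmn, hmb⟩ := Filter.frequently_atTop.mp hb (n + 1)
  refine ⟨(List.range (m - n)).map (fun i => w (n + i)), ?_, ?_, ?_⟩
  · simp only [ne_eq, List.map_eq_nil_iff, List.range_eq_nil]
    omega
  · have h := run_add δ q w n (m - n)
    rw [hna] at h
    rw [← h]
    rw [show n + (m - n) = m by omega]
    exact hmb
  · intro x' hx'
    rw [List.prefix_iff_eq_take] at hx'
    obtain ⟨k, hk, hx'eq⟩ : ∃ k, k ≤ m - n ∧ x' = (List.range k).map (fun i => w (n + i)) := by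
      refine ⟨x'.length ⊓ (m - n), inf_le_right, ?_⟩
      conv_lhs => rw [hx']
      rw [← List.map_take, List.take_range]
    rw [hx'eq]
    have h2 := run_add δ q w n k
    rw [hna] at h2
    rw [← h2]
    exact hN _ (by omega)

lemma upWord_ge {u v : List A} (hv : v ≠ []) (t : ℕ) :
    upWord u v hv (u.length + t) = v[t % v.length]'(Nat.mod_lt _ (List.length_pos_iff.mpr hv)) := by
  rw [upWord]
  rw [dif_neg (by omega)]
  simp

lemma run_to_u (δ : Q → A → Q) (q : Q) (u v : List A) (hv : v ≠ []) :
    run δ q (upWord u v hv) u.length = dstar δ q u := by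
  rw [run_eq_dstar]
  congr 1
  apply List.ext_getElem
  · simp
  · intro i h1 h2
    simp only [List.getElem_map, List.getElem_range]
    rw [upWord, dif_pos (by simpa using h2)]

lemma run_upWord (δ : Q → A → Q) (q : Q) (u v : List A) (hv : v ≠ [])
    (hloop : dstar δ (dstar δ q u) v = dstar δ q u) (t : ℕ) :
    run δ q (upWord u v hv) (u.length + t) = dstar δ (dstar δ q u) (v.take (t % v.length)) := by
  have hL : 0 < v.length := List.length_pos_iff.mpr hv
  induction t with
  | zero => simpa [dstar] using run_to_u δ q u v hv
  | succ t ih =>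
      rw [← Nat.add_assoc]
      have hrun : run δ q (upWord u v hv) (u.length + t + 1)
          = δ (run δ q (upWord u v hv) (u.length + t)) (upWord u v hv (u.length + t)) := rfl
      rw [hrun, ih, upWord_ge hv t]
      have hstep : δ (dstar δ (dstar δ q u) (v.take (t % v.length)))
            (v[t % v.length]'(Nat.mod_lt _ hL))
          = dstar δ (dstar δ q u) (v.take (t % v.length + 1)) := by
        rw [← List.take_concat_get (Nat.mod_lt _ hL)]
        rw [List.concat_eq_append, dstar_append]
        rfl
      rw [hstep]
      have hmod : (t + 1) % v.length = (t % v.length + 1) % v.length :=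
        (Nat.mod_add_mod t v.length 1).symm
      by_cases hc : t % v.length + 1 = v.length
      · rw [hc, List.take_length, hloop, hmod, hc, Nat.mod_self]
        simp [dstar]
      · have hlt : t % v.length + 1 < v.length :=
          lt_of_le_of_ne (Nat.succ_le_of_lt (Nat.mod_lt t hL)) hc
        rw [hmod, Nat.mod_eq_of_lt hlt]

lemma infOcc_upWord (δ : Q → A → Q) (q : Q) (u v : List A) (hv : v ≠ [])
    (hloop : dstar δ (dstar δ q u) v = dstar δ q u) :
    infOcc δ q (upWord u v hv)
      = {p | ∃ j, j < v.length ∧ dstar δ (dstar δ q u) (v.take j) = p} := by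
  have hL : 0 < v.length := List.length_pos_iff.mpr hv
  ext p
  constructor
  · intro hp
    obtain ⟨n, hn, hrun⟩ := Filter.frequently_atTop.mp hp u.length
    refine ⟨(n - u.length) % v.length, Nat.mod_lt _ hL, ?_⟩
    rw [← run_upWord δ q u v hv hloop, show u.length + (n - u.length) = n by omega]
    exact hrun
  · rintro ⟨j, hj, rfl⟩
    rw [infOcc]
    refine Filter.frequently_atTop.mpr fun N => ?_
    refine ⟨u.length + (j + N * v.length), by nlinarith, ?_⟩
    rw [run_upWord δ q u v hv hloop, Nat.add_mul_mod_self_right, Nat.mod_eq_of_lt hj]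

lemma prefix_append_closed (δ : Q → A → Q) (C : Set Q) (p p' : Q) (x y : List A)
    (hx : ∀ x', x' <+: x → dstar δ p x' ∈ C) (hxe : dstar δ p x = p')
    (hy : ∀ y', y' <+: y → dstar δ p' y' ∈ C) :
    ∀ z, z <+: x ++ y → dstar δ p z ∈ C := by
  intro z hz
  rcases le_or_gt z.length x.length with h | h
  · exact hx z (List.prefix_of_prefix_length_le hz (x.prefix_append y) h)
  · have hx' : x <+: z := List.prefix_of_prefix_length_le (x.prefix_append y) hz h.le
    obtain ⟨r, rfl⟩ := hx'
    have hr : r <+: y := by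
      obtain ⟨t, ht⟩ := hz
      exact ⟨t, List.append_cancel_left (by rw [← List.append_assoc]; exact ht)⟩
    rw [dstar_append, hxe]
    exact hy r hr

lemma main_A [Finite Q₁] [Finite Q₂]
    (δ₁ : Q₁ → A → Q₁) (q₁ : Q₁) (κ₁ : Q₁ → ℕ)
    (δ₂ : Q₂ → A → Q₂) (q₂ : Q₂) (κ₂ : Q₂ → ℕ) (C : Set (Q₁ × Q₂))
    (hC : IsSCC (prodStep δ₁ δ₂) C)
    (hre : ∀ p ∈ C, Reachable (prodStep δ₁ δ₂) (q₁, q₂) p)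
    (h1 : Odd (sInf (κ₁ '' (Prod.fst '' C))))
    (h2 : Even (sInf (κ₂ '' (Prod.snd '' C)))) :
    ∃ (u v : List A) (hv : v ≠ []),
      parityAccept δ₁ q₁ κ₁ (upWord u v hv) ∧ ¬ parityAccept δ₂ q₂ κ₂ (upWord u v hv) := by
  obtain ⟨hCne, hCscc⟩ := hC
  obtain ⟨p₀, hp₀⟩ := hCne
  have hne₁ : (κ₁ '' (Prod.fst '' C)).Nonempty := ⟨κ₁ p₀.1, p₀.1, ⟨p₀, hp₀, rfl⟩, rfl⟩
  have hne₂ : (κ₂ '' (Prod.snd '' C)).Nonempty := ⟨κ₂ p₀.2, p₀.2, ⟨p₀, hp₀, rfl⟩, rfl⟩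
  obtain ⟨a1, ⟨pa, hpaC, ha1⟩, hκa⟩ := Nat.sInf_mem hne₁
  obtain ⟨b1, ⟨pb, hpbC, hb1⟩, hκb⟩ := Nat.sInf_mem hne₂
  subst ha1 hb1
  obtain ⟨x₁, hx₁ne, hx₁end, hx₁pre⟩ := hCscc pa hpaC pb hpbC
  obtain ⟨x₂, hx₂ne, hx₂end, hx₂pre⟩ := hCscc pb hpbC pa hpaC
  obtain ⟨u, hu⟩ := hre pa hpaC
  set v := x₁ ++ x₂ with hvdef
  have hv : v ≠ [] := by simp [hvdef, hx₁ne]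
  have hloop : dstar (prodStep δ₁ δ₂) (dstar (prodStep δ₁ δ₂) (q₁, q₂) u) v
      = dstar (prodStep δ₁ δ₂) (q₁, q₂) u := by
    rw [hu, hvdef, dstar_append, hx₁end, hx₂end]
  have hpre : ∀ z, z <+: v → dstar (prodStep δ₁ δ₂) pa z ∈ C :=
    prefix_append_closed _ C pa pb x₁ x₂ hx₁pre hx₁end hx₂pre
  set w := upWord u v hv with hwdef
  have hInf : infOcc (prodStep δ₁ δ₂) (q₁, q₂) w
      = {p | ∃ j, j < v.length ∧ dstar (prodStep δ₁ δ₂) pa (v.take j) = p} := by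
    rw [hwdef, infOcc_upWord _ _ u v hv hloop, hu]
  set Lset := {p | ∃ j, j < v.length ∧ dstar (prodStep δ₁ δ₂) pa (v.take j) = p} with hLdef
  have hLC : Lset ⊆ C := by
    rintro p ⟨j, hj, rfl⟩
    exact hpre _ (List.take_prefix _ _)
  have hpaL : pa ∈ Lset := ⟨0, List.length_pos_iff.mpr hv, rfl⟩
  have hpbL : pb ∈ Lset := by
    refine ⟨x₁.length, by simp [hvdef]; exact List.length_pos_iff.mpr hx₂ne, ?_⟩
    rw [hvdef, List.take_left, hx₁end]
  have key₁ : sInf (κ₁ '' (Prod.fst '' Lset)) = sInf (κ₁ '' (Prod.fst '' C)) := by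
    apply le_antisymm
    · exact hκa ▸ Nat.sInf_le ⟨pa.1, ⟨pa, hpaL, rfl⟩, rfl⟩
    · have hLne : (κ₁ '' (Prod.fst '' Lset)).Nonempty := ⟨κ₁ pa.1, pa.1, ⟨pa, hpaL, rfl⟩, rfl⟩
      obtain ⟨c, ⟨p, hpL, hc1⟩, hc2⟩ := Nat.sInf_mem hLne
      rw [← hc2, ← hc1]
      exact Nat.sInf_le ⟨p.1, ⟨p, hLC hpL, rfl⟩, rfl⟩
  have key₂ : sInf (κ₂ '' (Prod.snd '' Lset)) = sInf (κ₂ '' (Prod.snd '' C)) := by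
    apply le_antisymm
    · exact hκb ▸ Nat.sInf_le ⟨pb.2, ⟨pb, hpbL, rfl⟩, rfl⟩
    · have hLne : (κ₂ '' (Prod.snd '' Lset)).Nonempty := ⟨κ₂ pb.2, pb.2, ⟨pb, hpbL, rfl⟩, rfl⟩
      obtain ⟨c, ⟨p, hpL, hc1⟩, hc2⟩ := Nat.sInf_mem hLne
      rw [← hc2, ← hc1]
      exact Nat.sInf_le ⟨p.2, ⟨p, hLC hpL, rfl⟩, rfl⟩
  refine ⟨u, v, hv, ?_, ?_⟩
  · rw [parityAccept, ← infOcc_prod_fst δ₁ δ₂ q₁ q₂ w, hInf, key₁]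
    exact h1
  · rw [parityAccept, ← infOcc_prod_snd δ₁ δ₂ q₁ q₂ w, hInf, key₂]
    exact Nat.not_odd_iff_even.mpr h2

lemma main_B [Finite Q₁] [Finite Q₂]
    (δ₁ : Q₁ → A → Q₁) (q₁ : Q₁) (κ₁ : Q₁ → ℕ)
    (δ₂ : Q₂ → A → Q₂) (q₂ : Q₂) (κ₂ : Q₂ → ℕ) (w : ℕ → A)
    (hw1 : parityAccept δ₁ q₁ κ₁ w) (hw2 : ¬ parityAccept δ₂ q₂ κ₂ w) :
    ∃ C : Set (Q₁ × Q₂), IsSCC (prodStep δ₁ δ₂) C ∧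
      (∀ p ∈ C, Reachable (prodStep δ₁ δ₂) (q₁, q₂) p) ∧
      Odd (sInf (κ₁ '' (Prod.fst '' C))) ∧ Even (sInf (κ₂ '' (Prod.snd '' C))) := by
  refine ⟨infOcc (prodStep δ₁ δ₂) (q₁, q₂) w, isSCC_infOcc _ _ _, ?_, ?_, ?_⟩
  · intro p hp
    obtain ⟨n, hn⟩ := hp.exists
    exact ⟨(List.range n).map w, by rw [← run_eq_dstar]; exact hn⟩
  · rw [infOcc_prod_fst]
    exact hw1
  · rw [infOcc_prod_snd]
    exact Nat.not_odd_iff_even.mp hw2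

end helpers

/-- Inclusion of DPAs holds iff no reachable SCC of the product has odd minimum `κ₁`-color on
its first projection and even minimum `κ₂`-color on its second projection; and non-inclusion
is witnessed by an ultimately periodic word. -/
theorem stmt11 {A Q₁ Q₂ : Type*} [Fintype A] [Fintype Q₁] [Fintype Q₂]
    (δ₁ : Q₁ → A → Q₁) (q₁ : Q₁) (κ₁ : Q₁ → ℕ)
    (δ₂ : Q₂ → A → Q₂) (q₂ : Q₂) (κ₂ : Q₂ → ℕ) :
    ({w : ℕ → A | parityAccept δ₁ q₁ κ₁ w} ⊆ {w | parityAccept δ₂ q₂ κ₂ w} ↔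
      ¬ ∃ C : Set (Q₁ × Q₂), IsSCC (prodStep δ₁ δ₂) C ∧
        (∀ p ∈ C, Reachable (prodStep δ₁ δ₂) (q₁, q₂) p) ∧
        Odd (sInf (κ₁ '' (Prod.fst '' C))) ∧ Even (sInf (κ₂ '' (Prod.snd '' C)))) ∧
    (¬ ({w : ℕ → A | parityAccept δ₁ q₁ κ₁ w} ⊆ {w | parityAccept δ₂ q₂ κ₂ w}) →
      ∃ (u v : List A) (hv : v ≠ []),
        parityAccept δ₁ q₁ κ₁ (upWord u v hv) ∧ ¬ parityAccept δ₂ q₂ κ₂ (upWord u v hv)) := by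
  constructor
  · constructor
    · intro hsub hbad
      obtain ⟨C, h1, h2, h3, h4⟩ := hbad
      obtain ⟨u, v, hv, ha, hna⟩ := main_A δ₁ q₁ κ₁ δ₂ q₂ κ₂ C h1 h2 h3 h4
      exact hna (hsub ha)
    · intro hno
      by_contra hnsub
      obtain ⟨w, hw1, hw2⟩ := Set.not_subset.mp hnsub
      exact hno (main_B δ₁ q₁ κ₁ δ₂ q₂ κ₂ w hw1 hw2)
  · intro hnsub
    obtain ⟨w, hw1, hw2⟩ := Set.not_subset.mp hnsub
    obtain ⟨C, h1, h2, h3, h4⟩ := main_B δ₁ q₁ κ₁ δ₂ q₂ κ₂ w hw1 hw2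
    exact main_A δ₁ q₁ κ₁ δ₂ q₂ κ₂ C h1 h2 h3 h4
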